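/- (Littlewood–Offord) Let s ∈ ℝ, n ∈ ℕ, and a_1, …, a_n ∈ ℝ with |a_i| ≥ 1 for all i. Then at most C(n, ⌊n/2⌋) of the 2^n sums Σ_{i=1}^n ε_i a_i with ε_i ∈ {−1, +1} lie in the open interval (s−1, s+1). -/

import Mathlib

open scoped Classical

/-- **Littlewood–Offord lemma.** If `|a i| ≥ 1` for all `i`, then at most
`C(n, ⌊n/2⌋)` of the `2^n` signed sums `∑ εᵢ aᵢ` with `εᵢ = ±1` lie in the
open interval `(s - 1, s + 1)`. -/
theorem stmt2 (s : ℝ) (n : ℕ) (a : Fin n → ℝ) (ha : ∀ i, 1 ≤ |a i|) :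
    (Finset.univ.filter (fun ε : Fin n → Bool =>
      (∑ i, (if ε i then (1 : ℝ) else -1) * a i) ∈ Set.Ioo (s - 1) (s + 1))).card
      ≤ n.choose (n / 2) := by
  classical
  have hane : ∀ i, a i ≠ 0 := fun i h => by
    have := ha i; rw [h, abs_zero] at this; linarith
  set t : (Fin n → Bool) → Fin n → ℝ := fun ε i => (if ε i then (1 : ℝ) else -1) * a i
    with ht
  have habs : ∀ ε i, |t ε i| = |a i| := by
    intro ε i
    simp only [ht, abs_mul]
    by_cases h : ε i <;> simp [h]
  set S : (Fin n → Bool) → Finset (Fin n) := fun ε =>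
    Finset.univ.filter (fun i => 0 < t ε i) with hS
  -- sum formula
  have hsum : ∀ ε, (∑ i, t ε i) =
      (∑ i ∈ S ε, |a i|) - ∑ i ∈ (S ε)ᶜ, |a i| := by
    intro ε
    have h1 : (∑ i ∈ S ε, |a i|) = ∑ i ∈ S ε, t ε i := by
      apply Finset.sum_congr rfl
      intro i hi
      rw [hS, Finset.mem_filter] at hi
      rw [← habs ε i, abs_of_pos hi.2]
    have h2 : (∑ i ∈ (S ε)ᶜ, |a i|) = ∑ i ∈ (S ε)ᶜ, (- t ε i) := by
      apply Finset.sum_congr rfl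
      intro i hi
      rw [Finset.mem_compl, hS, Finset.mem_filter] at hi
      have hle : t ε i ≤ 0 := by
        by_contra h
        exact hi ⟨Finset.mem_univ i, lt_of_not_ge h⟩
      have hne : t ε i ≠ 0 := by
        intro h
        have := habs ε i
        rw [h, abs_zero] at this
        exact hane i (abs_eq_zero.mp this.symm)
      rw [← habs ε i, abs_of_neg (lt_of_le_of_ne hle hne)]
    rw [h1, h2, Finset.sum_neg_distrib, sub_neg_eq_add,
      Finset.sum_add_sum_compl]
  -- injectivity of S
  have hne0 : ∀ ε i, t ε i ≠ 0 := by
    intro ε i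
    simp only [ht]
    by_cases h : ε i <;> simp [h, hane i]
  have hinj : Function.Injective S := by
    intro ε ε' h
    funext i
    have hiff : (0 < t ε i) ↔ (0 < t ε' i) := by
      constructor <;> intro hp
      · have : i ∈ S ε' := h ▸ (Finset.mem_filter.mpr ⟨Finset.mem_univ i, hp⟩)
        exact (Finset.mem_filter.mp this).2
      · have : i ∈ S ε := h ▸ (Finset.mem_filter.mpr ⟨Finset.mem_univ i, hp⟩)
        exact (Finset.mem_filter.mp this).2
    by_contra hb
    have hteq : t ε i = -(t ε' i) := by
      simp only [ht]
      cases h1 : ε i <;> cases h2 : ε' i <;> simp_all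
    rw [hteq, neg_pos] at hiff
    rcases (hne0 ε' i).lt_or_gt with hc | hc
    · linarith [hiff.mp hc]
    · linarith [hiff.mpr hc]
  set F := (Finset.univ.filter (fun ε : Fin n → Bool =>
      (∑ i, t ε i) ∈ Set.Ioo (s - 1) (s + 1))) with hF
  have hcard : F.card = (F.image S).card :=
    (Finset.card_image_of_injective F hinj).symm
  -- antichain
  have hanti : IsAntichain (· ⊆ ·) ((F.image S : Finset (Finset (Fin n))) : Set (Finset (Fin n))) := by
    intro A hA B hB hne hsub
    simp only [Finset.coe_image, Set.mem_image, Finset.mem_coe] at hA hB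
    obtain ⟨ε, hε, rfl⟩ := hA
    obtain ⟨ε', hε', rfl⟩ := hB
    rw [hF, Finset.mem_filter] at hε hε'
    obtain ⟨-, hε1, hε2⟩ := hε
    obtain ⟨-, hε'1, hε'2⟩ := hε'
    -- difference of sums
    have hdiff : (∑ i, t ε' i) - (∑ i, t ε i) = 2 * ∑ i ∈ S ε' \ S ε, |a i| := by
      rw [hsum, hsum]
      have hB : (∑ i ∈ S ε', |a i|) = (∑ i ∈ S ε, |a i|) + ∑ i ∈ S ε' \ S ε, |a i| := by
        rw [← Finset.sum_union (Finset.disjoint_sdiff),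
          Finset.union_sdiff_of_subset hsub]
      have hcompl : (S ε)ᶜ = (S ε')ᶜ ∪ (S ε' \ S ε) := by
        have hsub' : ∀ i, i ∈ S ε → i ∈ S ε' := fun i hi => hsub hi
        ext i
        simp only [Finset.mem_compl, Finset.mem_union, Finset.mem_sdiff]
        constructor
        · intro hi
          by_cases h' : i ∈ S ε'
          · exact Or.inr ⟨h', hi⟩
          · exact Or.inl h'
        · rintro (hi | ⟨-, hi⟩)
          · exact fun hc => hi (hsub' i hc)
          · exact hi
      have hBc : (∑ i ∈ (S ε)ᶜ, |a i|) = (∑ i ∈ (S ε')ᶜ, |a i|) + ∑ i ∈ S ε' \ S ε, |a i| := by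
        rw [hcompl, Finset.sum_union]
        rw [Finset.disjoint_right]
        intro i hi
        rw [Finset.mem_sdiff] at hi
        simp only [Finset.mem_compl, not_not]
        exact hi.1
      rw [hB, hBc]; ring
    have hne' : (S ε' \ S ε).Nonempty := by
      rw [Finset.sdiff_nonempty]
      intro h
      exact hne (Finset.Subset.antisymm hsub h)
    obtain ⟨j, hj⟩ := hne'
    have hge : (2 : ℝ) ≤ 2 * ∑ i ∈ S ε' \ S ε, |a i| := by
      have h1 : (1 : ℝ) ≤ ∑ i ∈ S ε' \ S ε, |a i| := by
        calc (1 : ℝ) ≤ |a j| := ha j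
        _ ≤ ∑ i ∈ S ε' \ S ε, |a i| :=
          Finset.single_le_sum (fun i _ => abs_nonneg (a i)) hj
      linarith
    linarith [hdiff ▸ hge]
  calc F.card = (F.image S).card := hcard
    _ ≤ (Fintype.card (Fin n)).choose (Fintype.card (Fin n) / 2) := IsAntichain.sperner hanti
    _ = n.choose (n / 2) := by rw [Fintype.card_fin]
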